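/- Let h(u) = (1/8) u^{−2} e^{−1/(8u)} for u > 0 (a probability density on (0,∞)). Let 0 < α < 3/4 and 0 < γ < 3/64, and let ω(u) = (γ^α/Γ(α)) u^{−α−1} e^{−γ/u} for u > 0 (the inverse-gamma(α, γ) density). Then there exists ξ ∈ (1, 4/3) such that ∫_0^∞ u^{3/2} h(u)³ / ( ( ∫_0^{ξu} v^{1/2} h(v) dv )³ · ω(u)² ) du < ∞. In fact this holds for every ξ with (1 − 16γ/3)^{−1} < ξ < 4/3. -/

import Mathlib

open MeasureTheory

section LaplaceAux
open MeasureTheory Set Real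

-- canonical form lemmas
lemma canon_mul {u : ℝ} (hu : 0 < u) (c₁ p₁ q₁ c₂ p₂ q₂ : ℝ) :
    (c₁ * u ^ p₁ * Real.exp (q₁ * u⁻¹)) * (c₂ * u ^ p₂ * Real.exp (q₂ * u⁻¹))
      = (c₁ * c₂) * u ^ (p₁ + p₂) * Real.exp ((q₁ + q₂) * u⁻¹) := by
  rw [Real.rpow_add hu, add_mul, Real.exp_add]; ring

lemma canon_pow {u : ℝ} (hu : 0 < u) (c p q : ℝ) (n : ℕ) :
    (c * u ^ p * Real.exp (q * u⁻¹)) ^ n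
      = c ^ n * u ^ ((n : ℝ) * p) * Real.exp (((n : ℝ) * q) * u⁻¹) := by
  rw [mul_pow, mul_pow, ← Real.rpow_natCast (u ^ p) n, ← Real.rpow_mul hu.le,
    mul_assoc ((n : ℝ)) q u⁻¹, Real.exp_nat_mul, mul_comm p (n : ℝ)]

lemma canon_inv {u : ℝ} (hu : 0 < u) (c p q : ℝ) :
    (c * u ^ p * Real.exp (q * u⁻¹))⁻¹ = c⁻¹ * u ^ (-p) * Real.exp ((-q) * u⁻¹) := by
  rw [mul_inv, mul_inv, Real.rpow_neg hu.le, neg_mul, Real.exp_neg]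

lemma canon_div {u : ℝ} (hu : 0 < u) (c₁ p₁ q₁ c₂ p₂ q₂ : ℝ) :
    (c₁ * u ^ p₁ * Real.exp (q₁ * u⁻¹)) / (c₂ * u ^ p₂ * Real.exp (q₂ * u⁻¹))
      = (c₁ / c₂) * u ^ (p₁ - p₂) * Real.exp ((q₁ - q₂) * u⁻¹) := by
  rw [div_eq_mul_inv, canon_inv hu, canon_mul hu, sub_eq_add_neg, sub_eq_add_neg,
    div_eq_mul_inv]

lemma hF_eq {x : ℝ} (hx : 0 < x) :
    x ^ ((1:ℝ)/2) * ((1/8) * (x^2)⁻¹ * Real.exp (-(1/(8*x))))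
      = (1/8) * x ^ (-(3:ℝ)/2) * Real.exp ((-(1/8)) * x⁻¹) := by
  have h2 : ((x:ℝ)^2)⁻¹ = x ^ (-2:ℝ) := by
    rw [show ((-2):ℝ) = -((2:ℕ):ℝ) by norm_num, Real.rpow_neg hx.le, Real.rpow_natCast]
  have h3 : -(1/(8*x)) = (-(1/8)) * x⁻¹ := by rw [one_div, mul_inv]; ring
  have h4 : x ^ ((1:ℝ)/2) = 1 * x ^ ((1:ℝ)/2) * Real.exp (0 * x⁻¹) := by simp
  rw [h2, h3, h4, canon_mul hx]
  norm_num

lemma exp_neg_le_sq {x : ℝ} (hx : 0 < x) :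
    Real.exp ((-(1/8)) * x⁻¹) ≤ 256 * x ^ 2 := by
  set y : ℝ := (1/8) * x⁻¹ with hy'
  have hy0 : 0 < y := by positivity
  have hsq : Real.exp (y/2) ^ 2 = Real.exp y := by
    rw [sq, ← Real.exp_add]; ring_nf
  have h2 : 1 + y/2 ≤ Real.exp (y/2) := by
    have := Real.add_one_le_exp (y/2); linarith
  have h1 : y^2/4 ≤ Real.exp y := by
    nlinarith [Real.exp_pos (y/2)]
  have hneg : Real.exp ((-(1/8)) * x⁻¹) = (Real.exp y)⁻¹ := by
    rw [← Real.exp_neg, hy']; congr 1; ring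
  rw [hneg]
  have hinv : (Real.exp y)⁻¹ ≤ (y^2/4)⁻¹ := by
    apply inv_anti₀ (by positivity) h1
  refine hinv.trans (le_of_eq ?_)
  rw [hy']
  field_simp
  ring

lemma innerIntegrable (h : ℝ → ℝ)
    (hh : ∀ u : ℝ, 0 < u → h u = (1 / 8) * (u ^ 2)⁻¹ * Real.exp (-(1 / (8 * u))))
    {t : ℝ} (ht : 0 < t) :
    IntegrableOn (fun v => v ^ ((1:ℝ)/2) * h v) (Ioc 0 t) := by
  have hG : IntegrableOn
      (fun v : ℝ => v ^ ((1:ℝ)/2) * ((1/8) * (v^2)⁻¹ * Real.exp (-(1/(8*v)))))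
      (Ioc 0 t) := by
    apply Measure.integrableOn_of_bounded (M := 32 * t ^ ((1:ℝ)/2))
    · exact measure_Ioc_lt_top.ne
    · apply Measurable.aestronglyMeasurable
      fun_prop
    · filter_upwards [ae_restrict_mem measurableSet_Ioc] with x hx
      have hx0 : 0 < x := hx.1
      rw [Real.norm_eq_abs, abs_of_nonneg (by positivity), hF_eq hx0]
      have hexp := exp_neg_le_sq hx0
      have step1 : (1/8) * x ^ (-(3:ℝ)/2) * Real.exp ((-(1/8)) * x⁻¹)
          ≤ (1/8) * x ^ (-(3:ℝ)/2) * (256 * x ^ 2) := by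
        have hxr : (0:ℝ) < x ^ (-(3:ℝ)/2) := Real.rpow_pos_of_pos hx0 _
        nlinarith
      refine step1.trans ?_
      have hxx : x ^ (-(3:ℝ)/2) * x ^ 2 = x ^ ((1:ℝ)/2) := by
        rw [← Real.rpow_natCast x 2, ← Real.rpow_add hx0]
        norm_num
      have : (1/8 : ℝ) * x ^ (-(3:ℝ)/2) * (256 * x ^ 2) = 32 * (x ^ (-(3:ℝ)/2) * x ^ 2) := by ring
      rw [this, hxx]
      have : x ^ ((1:ℝ)/2) ≤ t ^ ((1:ℝ)/2) := Real.rpow_le_rpow hx0.le hx.2 (by norm_num)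
      linarith
  apply hG.congr_fun _ measurableSet_Ioc
  intro x hx
  dsimp only
  rw [hh x hx.1]

lemma innerLower (h : ℝ → ℝ)
    (hh : ∀ u : ℝ, 0 < u → h u = (1 / 8) * (u ^ 2)⁻¹ * Real.exp (-(1 / (8 * u))))
    {a b T : ℝ} (ha : 0 < a) (hab : a < b) (hbT : b ≤ T) :
    (1/8) * b ^ (-(3:ℝ)/2) * Real.exp ((-(1/8)) * a⁻¹) * (b - a)
      ≤ ∫ v in Ioc (0:ℝ) T, v ^ ((1:ℝ)/2) * h v := by
  have hb : 0 < b := ha.trans hab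
  have hT : 0 < T := hb.trans_le hbT
  have hint := innerIntegrable h hh hT
  have hsub : Ioc a b ⊆ Ioc 0 T := Ioc_subset_Ioc ha.le hbT
  have hnonneg : 0 ≤ᵐ[volume.restrict (Ioc (0:ℝ) T)] fun v => v ^ ((1:ℝ)/2) * h v := by
    filter_upwards [ae_restrict_mem measurableSet_Ioc] with x hx
    have hx0 : 0 < x := hx.1
    rw [hh x hx0]
    positivity
  have step2 : (1/8) * b ^ (-(3:ℝ)/2) * Real.exp ((-(1/8)) * a⁻¹) * (b - a)
      ≤ ∫ v in Ioc a b, v ^ ((1:ℝ)/2) * h v := by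
    have hmeas : (volume (Ioc a b)).toReal = b - a := by
      rw [Real.volume_Ioc, ENNReal.toReal_ofReal (by linarith)]
    have := setIntegral_ge_of_const_le_real (μ := volume)
      (c := (1/8) * b ^ (-(3:ℝ)/2) * Real.exp ((-(1/8)) * a⁻¹))
      (f := fun v => v ^ ((1:ℝ)/2) * h v)
      measurableSet_Ioc measure_Ioc_lt_top.ne ?_ (hint.mono_set hsub)
    · rw [← hmeas]; exact this
    · intro x hx
      have hx0 : 0 < x := ha.trans hx.1
      rw [hh x hx0, hF_eq hx0]
      have h1 : b ^ (-(3:ℝ)/2) ≤ x ^ (-(3:ℝ)/2) :=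
        Real.rpow_le_rpow_of_nonpos hx0 hx.2 (by norm_num)
      have h2 : Real.exp ((-(1/8)) * a⁻¹) ≤ Real.exp ((-(1/8)) * x⁻¹) := by
        apply Real.exp_le_exp.mpr
        have hia : x⁻¹ ≤ a⁻¹ := inv_anti₀ ha hx.1.le
        nlinarith
      have hbp : (0:ℝ) < b ^ (-(3:ℝ)/2) := Real.rpow_pos_of_pos hb _
      have hxp : (0:ℝ) < x ^ (-(3:ℝ)/2) := Real.rpow_pos_of_pos hx0 _
      have hea : (0:ℝ) < Real.exp ((-(1/8)) * a⁻¹) := Real.exp_pos _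
      nlinarith
  refine step2.trans ?_
  exact setIntegral_mono_set hint hnonneg (HasSubset.Subset.eventuallyLE hsub)

lemma canon_le {u c p q : ℝ} (hu : 0 < u) (hc : 0 ≤ c) (hq : q ≤ 0) :
    c * u ^ p * Real.exp (q * u⁻¹) ≤ c * u ^ p := by
  have h1 : Real.exp (q * u⁻¹) ≤ 1 := by
    rw [Real.exp_le_one_iff]
    exact mul_nonpos_of_nonpos_of_nonneg hq (by positivity)
  have h2 : 0 ≤ c * u ^ p := by positivity
  nlinarith

lemma canon_congr {u : ℝ} (hu : 0 < u) {c₁ p₁ q₁ c₂ p₂ : ℝ} (hc : c₁ = c₂) (hp : p₁ = p₂)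
    (hq : q₁ = 0) : c₁ * u ^ p₁ * Real.exp (q₁ * u⁻¹) = c₂ * u ^ p₂ := by
  subst hc; subst hp; subst hq; simp

lemma h_canon (h : ℝ → ℝ)
    (hh : ∀ u : ℝ, 0 < u → h u = (1 / 8) * (u ^ 2)⁻¹ * Real.exp (-(1 / (8 * u))))
    {x : ℝ} (hx : 0 < x) :
    h x = (1/8) * x ^ ((-2):ℝ) * Real.exp ((-(1/8)) * x⁻¹) := by
  rw [hh x hx,
    show ((x:ℝ)^2)⁻¹ = x ^ ((-2):ℝ) from by
      rw [show ((-2):ℝ) = -((2:ℕ):ℝ) by norm_num, Real.rpow_neg hx.le, Real.rpow_natCast],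
    show -(1/(8*x)) = (-(1/8)) * x⁻¹ from by rw [one_div, mul_inv]; ring]

lemma N_canon (h : ℝ → ℝ)
    (hh : ∀ u : ℝ, 0 < u → h u = (1 / 8) * (u ^ 2)⁻¹ * Real.exp (-(1 / (8 * u))))
    {x : ℝ} (hx : 0 < x) :
    x ^ ((3:ℝ)/2) * h x ^ 3 = (1/512) * x ^ ((-9:ℝ)/2) * Real.exp ((-(3/8)) * x⁻¹) := by
  rw [h_canon h hh hx, canon_pow hx,
    show x ^ ((3:ℝ)/2) = 1 * x ^ ((3:ℝ)/2) * Real.exp (0 * x⁻¹) from by simp, canon_mul hx]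
  norm_num

lemma ω_canon (ω : ℝ → ℝ) (α γ : ℝ)
    (hω : ∀ u : ℝ, 0 < u →
      ω u = (γ ^ α / Real.Gamma α) * u ^ (-α - 1) * Real.exp (-(γ / u)))
    {x : ℝ} (hx : 0 < x) :
    ω x = (γ ^ α / Real.Gamma α) * x ^ (-α - 1) * Real.exp ((-γ) * x⁻¹) := by
  rw [hω x hx, show -(γ/x) = (-γ) * x⁻¹ from by rw [div_eq_mul_inv]; ring]

lemma canon_congr' {u c₁ p₁ q₁ c₂ p₂ q₂ : ℝ} (hc : c₁ = c₂) (hp : p₁ = p₂) (hq : q₁ = q₂) :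
    c₁ * u ^ p₁ * Real.exp (q₁ * u⁻¹) = c₂ * u ^ p₂ * Real.exp (q₂ * u⁻¹) := by
  subst hc; subst hp; subst hq; rfl

set_option maxHeartbeats 1000000 in
lemma main_finite (α γ ξ : ℝ) (hα0 : 0 < α) (hα : α < 3 / 4) (hγ0 : 0 < γ) (hγ : γ < 3 / 64)
    (h : ℝ → ℝ)
    (hh : ∀ u : ℝ, 0 < u → h u = (1 / 8) * (u ^ 2)⁻¹ * Real.exp (-(1 / (8 * u))))
    (ω : ℝ → ℝ)
    (hω : ∀ u : ℝ, 0 < u →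
      ω u = (γ ^ α / Real.Gamma α) * u ^ (-α - 1) * Real.exp (-(γ / u)))
    (hξ1 : (1 - 16 * γ / 3)⁻¹ < ξ) (hξ2 : ξ < 4 / 3) :
    ∫⁻ u in Set.Ioi (0 : ℝ), ENNReal.ofReal
        (u ^ ((3 : ℝ) / 2) * h u ^ 3 /
          ((∫ v in Set.Ioc (0 : ℝ) (ξ * u), v ^ ((1 : ℝ) / 2) * h v) ^ 3 *
            ω u ^ 2)) < ⊤ := by
  have hden : (0:ℝ) < 1 - 16 * γ / 3 := by linarith
  have hξpos : (0:ℝ) < ξ := lt_trans (by positivity) hξ1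
  have hinv : (1 - 16*γ/3)⁻¹ * (1 - 16*γ/3) = 1 := inv_mul_cancel₀ hden.ne'
  have hξ1' : 1 < ξ := by nlinarith
  have hK0 : 0 < γ ^ α / Real.Gamma α :=
    div_pos (Real.rpow_pos_of_pos hγ0 α) (Real.Gamma_pos_of_pos hα0)
  set K := γ ^ α / Real.Gamma α with hK
  set ε := ξ * (1 - 16 * γ / 3) - 1 with hε
  have hε0 : 0 < ε := by rw [hε]; nlinarith
  have h1ε : (0:ℝ) < 1 + ε := by linarith
  have hεξ : (1 + ε) / ξ = 1 - 16 * γ / 3 := by rw [hε]; field_simp; ring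
  -- the two constants
  set cL : ℝ := (1/8) * ξ ^ (-(3:ℝ)/2) * (ξ - ξ/(1+ε)) with hcL
  have hcL0 : 0 < cL := by
    rw [hcL]
    have : ξ/(1+ε) < ξ := div_lt_self hξpos (by linarith)
    have h8 : (0:ℝ) < ξ ^ (-(3:ℝ)/2) := Real.rpow_pos_of_pos hξpos _
    nlinarith
  set L1 : ℝ := (1/8) * (1:ℝ) ^ (-(3:ℝ)/2) * Real.exp ((-(1/8)) * ((1:ℝ)/2)⁻¹) * (1 - 1/2)
    with hL1
  have hL10 : 0 < L1 := by rw [hL1]; positivity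
  set C1 : ℝ := (1/512) / (cL^3 * K^2) with hC1
  set C2 : ℝ := (1/512) / (L1^3 * K^2) with hC2
  have hC10 : 0 < C1 := by rw [hC1]; positivity
  have hC20 : 0 < C2 := by rw [hC2]; positivity
  -- pointwise bounds
  have hbound1 : ∀ u ∈ Ioc (0:ℝ) 1,
      u ^ ((3 : ℝ) / 2) * h u ^ 3 /
          ((∫ v in Set.Ioc (0 : ℝ) (ξ * u), v ^ ((1 : ℝ) / 2) * h v) ^ 3 * ω u ^ 2)
        ≤ C1 * u ^ (2*α - 1) := by
    intro u hu
    have hu0 : 0 < u := hu.1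
    have ha : 0 < ξ*u/(1+ε) := by positivity
    have hab : ξ*u/(1+ε) < ξ*u := div_lt_self (by positivity) (by linarith)
    have hLD := innerLower h hh ha hab le_rfl
    have hωc := ω_canon ω α γ hω hu0
    have hωpos : 0 < ω u := by rw [hωc]; positivity
    have hLcanon : (1/8) * (ξ*u) ^ (-(3:ℝ)/2) * Real.exp ((-(1/8)) * (ξ*u/(1+ε))⁻¹)
          * (ξ*u - ξ*u/(1+ε))
        = cL * u ^ (-(1:ℝ)/2) * Real.exp (((-(1/8)) * ((1+ε)/ξ)) * u⁻¹) := by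
      have e3 : (ξ*u) ^ (-(3:ℝ)/2) = ξ ^ (-(3:ℝ)/2) * u ^ (-(3:ℝ)/2) :=
        Real.mul_rpow hξpos.le hu0.le
      have e1 : (ξ*u/(1+ε))⁻¹ = (-(1/8))⁻¹ * (((-(1/8)) * ((1+ε)/ξ)) * u⁻¹) := by
        field_simp
      have e2 : ξ*u - ξ*u/(1+ε) = (ξ - ξ/(1+ε)) * u := by ring
      have e4 : u ^ (-(3:ℝ)/2) * u ^ (1:ℝ) = u ^ (-(1:ℝ)/2) := by
        rw [← Real.rpow_add hu0]; norm_num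
      rw [e3, e1, e2, show (-(1/8) : ℝ) * ((-(1/8))⁻¹ * (((-(1/8)) * ((1+ε)/ξ)) * u⁻¹))
          = ((-(1/8)) * ((1+ε)/ξ)) * u⁻¹ from by field_simp]
      rw [← e4, Real.rpow_one, hcL]
      ring
    rw [hLcanon] at hLD
    have hLpos : 0 < cL * u ^ (-(1:ℝ)/2) * Real.exp (((-(1/8)) * ((1+ε)/ξ)) * u⁻¹) := by
      positivity
    have hN0 : 0 ≤ u ^ ((3 : ℝ) / 2) * h u ^ 3 := by
      rw [N_canon h hh hu0]; positivity
    have hDpos : 0 < (∫ v in Set.Ioc (0 : ℝ) (ξ * u), v ^ ((1 : ℝ) / 2) * h v) :=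
      lt_of_lt_of_le hLpos hLD
    calc u ^ ((3 : ℝ) / 2) * h u ^ 3 /
          ((∫ v in Set.Ioc (0 : ℝ) (ξ * u), v ^ ((1 : ℝ) / 2) * h v) ^ 3 * ω u ^ 2)
        ≤ u ^ ((3 : ℝ) / 2) * h u ^ 3 /
          ((cL * u ^ (-(1:ℝ)/2) * Real.exp (((-(1/8)) * ((1+ε)/ξ)) * u⁻¹)) ^ 3 * ω u ^ 2) := by
          gcongr
      _ = C1 * u ^ (2*α - 1) := by
          rw [N_canon h hh hu0, hωc, canon_pow hu0, canon_pow hu0, canon_mul hu0,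
            canon_div hu0]
          refine canon_congr hu0 ?_ ?_ ?_
          · rw [hC1]
          · push_cast; ring
          · push_cast; rw [hεξ]; ring
  have hbound2 : ∀ u ∈ Ioi (1:ℝ),
      u ^ ((3 : ℝ) / 2) * h u ^ 3 /
          ((∫ v in Set.Ioc (0 : ℝ) (ξ * u), v ^ ((1 : ℝ) / 2) * h v) ^ 3 * ω u ^ 2)
        ≤ C2 * u ^ (2*α - 5/2) := by
    intro u hu
    have hu0 : 0 < u := lt_trans one_pos hu
    have h1T : (1:ℝ) ≤ ξ * u := by nlinarith [Set.mem_Ioi.mp hu]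
    have hLD := innerLower h hh (a := 1/2) (b := 1) (T := ξ*u) (by norm_num) (by norm_num) h1T
    have hLD' : L1 ≤ ∫ v in Set.Ioc (0 : ℝ) (ξ * u), v ^ ((1 : ℝ) / 2) * h v := by
      rw [hL1]; exact hLD
    have hωc := ω_canon ω α γ hω hu0
    have hωpos : 0 < ω u := by rw [hωc]; positivity
    have hN0 : 0 ≤ u ^ ((3 : ℝ) / 2) * h u ^ 3 := by
      rw [N_canon h hh hu0]; positivity
    have hDpos : 0 < (∫ v in Set.Ioc (0 : ℝ) (ξ * u), v ^ ((1 : ℝ) / 2) * h v) :=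
      lt_of_lt_of_le hL10 hLD'
    have hL1canon : L1 = L1 * u ^ (0:ℝ) * Real.exp (0 * u⁻¹) := by simp
    calc u ^ ((3 : ℝ) / 2) * h u ^ 3 /
          ((∫ v in Set.Ioc (0 : ℝ) (ξ * u), v ^ ((1 : ℝ) / 2) * h v) ^ 3 * ω u ^ 2)
        ≤ u ^ ((3 : ℝ) / 2) * h u ^ 3 / (L1 ^ 3 * ω u ^ 2) := by gcongr
      _ = C2 * u ^ (2*α - 5/2) * Real.exp (((-(3/8)) + 2*γ) * u⁻¹) := by
          rw [N_canon h hh hu0, hωc, hL1canon, canon_pow hu0, canon_pow hu0, canon_mul hu0,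
            canon_div hu0]
          refine canon_congr' ?_ ?_ ?_
          · rw [hC2]
          · push_cast; ring
          · push_cast; ring
      _ ≤ C2 * u ^ (2*α - 5/2) := canon_le hu0 hC20.le (by linarith)
  have hsplit : Ioc (0:ℝ) 1 ∪ Ioi (1:ℝ) = Ioi 0 := Ioc_union_Ioi_eq_Ioi zero_le_one
  rw [← hsplit, lintegral_union measurableSet_Ioi Ioc_disjoint_Ioi_same]
  refine ENNReal.add_lt_top.mpr ⟨?_, ?_⟩
  · refine lt_of_le_of_lt (setLIntegral_mono' measurableSet_Ioc
      (fun u hu => ENNReal.ofReal_le_ofReal (hbound1 u hu))) ?_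
    show ∫⁻ u in Ioc (0:ℝ) 1, ENNReal.ofReal (C1 * u ^ (2*α-1)) < ⊤
    · 
          apply IntegrableOn.setLIntegral_lt_top
          have hint : IntegrableOn (fun u : ℝ => u ^ (2*α-1)) (Ioc 0 1) := by
            rw [integrableOn_Ioc_iff_integrableOn_Ioo]
            exact (intervalIntegral.integrableOn_Ioo_rpow_iff one_pos).mpr (by linarith)
          exact hint.const_mul C1
  · refine lt_of_le_of_lt (setLIntegral_mono' measurableSet_Ioi
      (fun u hu => ENNReal.ofReal_le_ofReal (hbound2 u hu))) ?_
    show ∫⁻ u in Ioi (1:ℝ), ENNReal.ofReal (C2 * u ^ (2*α-5/2)) < ⊤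
    · 
          apply IntegrableOn.setLIntegral_lt_top
          have hint : IntegrableOn (fun u : ℝ => u ^ (2*α-5/2)) (Ioi 1) :=
            integrableOn_Ioi_rpow_of_lt (by linarith) one_pos
          exact hint.const_mul C2

end LaplaceAux

/-- Let `h(u) = (1/8) u⁻² e^{−1/(8u)}` on `(0,∞)` and let `ω` be
the inverse-gamma(α, γ) density with `0 < α < 3/4` and `0 < γ < 3/64`.  Then
there exists `ξ ∈ (1, 4/3)` such that
`∫_0^∞ u^{3/2} h(u)³ / ((∫_0^{ξu} v^{1/2} h(v) dv)³ ω(u)²) du < ∞`; in fact this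
holds for every `ξ` with `(1 − 16γ/3)⁻¹ < ξ < 4/3`. -/
theorem laplace_mixing_density_finite_variance_condition
    (α γ : ℝ) (hα0 : 0 < α) (hα : α < 3 / 4) (hγ0 : 0 < γ) (hγ : γ < 3 / 64)
    (h : ℝ → ℝ)
    (hh : ∀ u : ℝ, 0 < u → h u = (1 / 8) * (u ^ 2)⁻¹ * Real.exp (-(1 / (8 * u))))
    (ω : ℝ → ℝ)
    (hω : ∀ u : ℝ, 0 < u →
      ω u = (γ ^ α / Real.Gamma α) * u ^ (-α - 1) * Real.exp (-(γ / u))) :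
    (∃ ξ : ℝ, 1 < ξ ∧ ξ < 4 / 3 ∧
      ∫⁻ u in Set.Ioi (0 : ℝ), ENNReal.ofReal
        (u ^ ((3 : ℝ) / 2) * h u ^ 3 /
          ((∫ v in Set.Ioc (0 : ℝ) (ξ * u), v ^ ((1 : ℝ) / 2) * h v) ^ 3 *
            ω u ^ 2)) < ⊤) ∧
    (∀ ξ : ℝ, (1 - 16 * γ / 3)⁻¹ < ξ → ξ < 4 / 3 →
      ∫⁻ u in Set.Ioi (0 : ℝ), ENNReal.ofReal
        (u ^ ((3 : ℝ) / 2) * h u ^ 3 /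
          ((∫ v in Set.Ioc (0 : ℝ) (ξ * u), v ^ ((1 : ℝ) / 2) * h v) ^ 3 *
            ω u ^ 2)) < ⊤) := by
  have hden : (0:ℝ) < 1 - 16*γ/3 := by linarith
  have hinv : (1 - 16*γ/3)⁻¹ * (1 - 16*γ/3) = 1 := inv_mul_cancel₀ hden.ne'
  have hipos : 0 < (1 - 16*γ/3)⁻¹ := by positivity
  have hlt : (1 - 16*γ/3)⁻¹ < 4/3 := by nlinarith
  have hgt : 1 < (1 - 16*γ/3)⁻¹ := by nlinarith
  constructor
  · refine ⟨((1 - 16*γ/3)⁻¹ + 4/3)/2, by linarith, by linarith, ?_⟩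
    exact main_finite α γ _ hα0 hα hγ0 hγ h hh ω hω (by linarith) (by linarith)
  · intro ξ h1 h2
    exact main_finite α γ ξ hα0 hα hγ0 hγ h hh ω hω h1 h2
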